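/- Let f : ℝ → ℝ be continuously differentiable with f(t) > 0 and f'(t) ≥ 0 for all t ≥ 0, and such that f(t)/t^{p-1} → +∞ as t → +∞. Then there exists a constant C depending only on n, p and f such that: every radially decreasing W^{1,p} solution u of -Δ_p u = f(u) on the punctured unit ball (in radial coordinates) with u(r) > 0 for r ∈ (0,1) and u(1) = 0 satisfies ∫_0^1 r^{n-1} ( u(r)^{p-1} + f(u(r)) ) dr ≤ C. -/

import Mathlib

open MeasureTheory Set Real Filter Topology

/-- The radial `W^{1,p}` norm of a radial function `u` with radial derivative `u'`
on the unit ball of `ℝ^n`, written in radial coordinates. -/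
noncomputable def radialNorm (n : ℕ) (p : ℝ) (u u' : ℝ → ℝ) : ℝ :=
  (∫ r in Ioc (0:ℝ) 1, r ^ ((n : ℝ) - 1) * (|u r| ^ p + |u' r| ^ p)) ^ (1 / p)

/-- `u : (0,1] → ℝ` (with radial derivative `u'`) is a radially decreasing `W^{1,p}`
solution of `-Δ_p u = g(u)` on the punctured unit ball, in radial coordinates:
`u` is `C^1` on `(0,1]` with derivative `u'`, `u' < 0` on `(0,1)`,
`r ↦ r^{n-1}|u'|^{p-2}u'` has derivative `-r^{n-1} g(u(r))` on `(0,1)`, and the radial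
`W^{1,p}` norm of `u` is finite. -/
def IsRadialSolution (n : ℕ) (p : ℝ) (g : ℝ → ℝ) (u u' : ℝ → ℝ) : Prop :=
  (∀ r ∈ Ioc (0:ℝ) 1, HasDerivWithinAt u (u' r) (Ioc (0:ℝ) 1) r) ∧
  ContinuousOn u' (Ioc (0:ℝ) 1) ∧
  (∀ r ∈ Ioo (0:ℝ) 1, u' r < 0) ∧
  (∀ r ∈ Ioo (0:ℝ) 1,
    HasDerivAt (fun s : ℝ => s ^ ((n : ℝ) - 1) * |u' s| ^ (p - 2) * u' s)
      (-(r ^ ((n : ℝ) - 1) * g (u r))) r) ∧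
  IntegrableOn (fun r : ℝ => r ^ ((n : ℝ) - 1) * (|u r| ^ p + |u' r| ^ p)) (Ioc (0:ℝ) 1)

/-- Semi-stability of a radial solution: the second variation of energy is nonnegative
for every `C^1` test function with compact support in `(0,1)`. -/
def IsSemiStable (n : ℕ) (p : ℝ) (g : ℝ → ℝ) (u u' : ℝ → ℝ) : Prop :=
  ∀ ξ : ℝ → ℝ, ContDiff ℝ 1 ξ → IsCompact (tsupport ξ) → tsupport ξ ⊆ Ioo (0:ℝ) 1 →
    0 ≤ ∫ r in Ioc (0:ℝ) 1,
        r ^ ((n : ℝ) - 1) *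
          ((p - 1) * |u' r| ^ (p - 2) * (deriv ξ r) ^ 2 - deriv g (u r) * (ξ r) ^ 2)

lemma phi_cont {p : ℝ} (hp : 1 < p) : Continuous fun x : ℝ => |x| ^ (p - 2) * x := by
  rw [continuous_iff_continuousAt]
  intro x
  rcases eq_or_ne x 0 with rfl | hx
  · have h0 : |(0:ℝ)| ^ (p - 2) * (0:ℝ) = 0 := by simp
    rw [ContinuousAt, h0]
    have hb : Tendsto (fun x : ℝ => |x| ^ (p - 1)) (𝓝 0) (𝓝 0) := by
      have hc : ContinuousAt (fun x : ℝ => |x| ^ (p - 1)) 0 :=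
        (Real.continuousAt_rpow_const _ _ (Or.inr (by linarith))).comp
          continuous_abs.continuousAt
      simpa [Real.zero_rpow (show p - 1 ≠ 0 by linarith)] using hc.tendsto
    apply squeeze_zero_norm _ hb
    intro y
    rcases eq_or_ne y 0 with rfl | hy
    · simp [Real.zero_rpow (show p - 1 ≠ 0 by linarith)]
    · have habs : |y| ≠ 0 := abs_ne_zero.2 hy
      have : ‖|y| ^ (p - 2) * y‖ = |y| ^ (p - 2) * |y| := by
        rw [Real.norm_eq_abs, abs_mul, abs_of_nonneg (Real.rpow_nonneg (abs_nonneg y) _)]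
      rw [this, ← Real.rpow_add_one habs]
      ring_nf
      exact le_rfl
  · exact (((Real.continuousAt_rpow_const _ _ (Or.inl (abs_ne_zero.2 hx))).comp
      continuous_abs.continuousAt).mul continuousAt_id)

set_option maxHeartbeats 1000000 in
theorem stmt18 (n : ℕ) (hn : 1 ≤ n) (p : ℝ) (hp : 1 < p)
    (f : ℝ → ℝ) (hf : ContDiff ℝ 1 f)
    (hfpos : ∀ t : ℝ, 0 ≤ t → 0 < f t) (hfmono : ∀ t : ℝ, 0 ≤ t → 0 ≤ deriv f t)
    (hsuper : Tendsto (fun t : ℝ => f t / t ^ (p - 1)) atTop atTop) :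
    ∃ C : ℝ, 0 < C ∧ ∀ (u u' : ℝ → ℝ),
      IsRadialSolution n p f u u' →
      (∀ r ∈ Ioo (0:ℝ) 1, 0 < u r) → u 1 = 0 →
      IntegrableOn
        (fun r : ℝ => r ^ ((n : ℝ) - 1) * ((u r) ^ (p - 1) + f (u r))) (Ioc (0:ℝ) 1) ∧
      ∫ r in Ioc (0:ℝ) 1, r ^ ((n : ℝ) - 1) * ((u r) ^ (p - 1) + f (u r)) ≤ C := by
  have hexp : (0:ℝ) ≤ (n : ℝ) - 1 := by
    have : (1:ℝ) ≤ (n : ℝ) := by exact_mod_cast hn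
    linarith
  have hp1 : (0:ℝ) < p - 1 := by linarith
  have hp1' : (0:ℝ) ≤ p - 1 := hp1.le
  obtain ⟨A, hAdef⟩ : ∃ A : ℝ, A = (1/2 : ℝ) ^ ((n : ℝ) - 1) := ⟨_, rfl⟩
  have hA0 : 0 < A := hAdef ▸ Real.rpow_pos_of_pos (by norm_num) _
  have hA1 : A ≤ 1 := hAdef ▸ Real.rpow_le_one (by norm_num) (by norm_num) hexp
  obtain ⟨B, hBdef⟩ : ∃ B : ℝ, B = 8 / A := ⟨_, rfl⟩
  have hB0 : 0 < B := hBdef ▸ div_pos (by norm_num) hA0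
  obtain ⟨Kstar, hKdef⟩ : ∃ K : ℝ, K = (4 / A) * (2 * B ^ (p - 1)) := ⟨_, rfl⟩
  -- superlinearity thresholds
  obtain ⟨T₁, hT₁⟩ := Filter.eventually_atTop.mp (hsuper.eventually_ge_atTop (Kstar + 1))
  obtain ⟨T₂, hT₂⟩ := Filter.eventually_atTop.mp (hsuper.eventually_ge_atTop 1)
  obtain ⟨Ts, hTsdef⟩ : ∃ T : ℝ, T = max T₁ 1 := ⟨_, rfl⟩
  obtain ⟨T₀, hT₀def⟩ : ∃ T : ℝ, T = max T₂ 1 := ⟨_, rfl⟩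
  have hTs1 : (1:ℝ) ≤ Ts := hTsdef ▸ le_max_right _ _
  have hT₀1 : (1:ℝ) ≤ T₀ := hT₀def ▸ le_max_right _ _
  have hTs0 : (0:ℝ) < Ts := lt_of_lt_of_le one_pos hTs1
  have hT₀0 : (0:ℝ) < T₀ := lt_of_lt_of_le one_pos hT₀1
  obtain ⟨Φmax, hΦmaxdef⟩ : ∃ Φm : ℝ, Φm = 2 * B ^ (p - 1) * Ts ^ (p - 1) := ⟨_, rfl⟩
  have hΦmax0 : 0 < Φmax := by
    rw [hΦmaxdef]
    have h1 : (0:ℝ) < B ^ (p - 1) := Real.rpow_pos_of_pos hB0 _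
    have h2 : (0:ℝ) < Ts ^ (p - 1) := Real.rpow_pos_of_pos hTs0 _
    positivity
  have hT₀p : (0:ℝ) ≤ T₀ ^ (p - 1) := Real.rpow_nonneg hT₀0.le _
  refine ⟨2 * Φmax + T₀ ^ (p - 1) + 1, by linarith [hΦmax0, hT₀p], ?_⟩
  intro u u' hsol hupos hu1
  obtain ⟨hud, hu'c, hu'neg, hODE, hW⟩ := hsol
  -- continuity of u
  have hucont : ContinuousOn u (Ioc (0:ℝ) 1) := fun r hr => (hud r hr).continuousWithinAt
  -- monotonicity of u
  have hmono : ∀ x ∈ Ioc (0:ℝ) 1, ∀ y ∈ Ioc (0:ℝ) 1, x ≤ y → u y ≤ u x := by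
    intro x hx y hy hxy
    have hsub : Icc x 1 ⊆ Ioc (0:ℝ) 1 := fun z hz => ⟨lt_of_lt_of_le hx.1 hz.1, hz.2⟩
    have hanti : StrictAntiOn u (Icc x 1) := by
      apply strictAntiOn_of_deriv_neg (convex_Icc _ _) (hucont.mono hsub)
      intro z hz
      rw [interior_Icc] at hz
      have hz' : z ∈ Ioo (0:ℝ) 1 := ⟨lt_trans hx.1 hz.1, hz.2⟩
      have hd : HasDerivAt u (u' z) z :=
        (hud z ⟨hz'.1, hz'.2.le⟩).hasDerivAt (Ioc_mem_nhds hz'.1 hz'.2)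
      rw [hd.deriv]
      exact hu'neg z hz'
    rcases eq_or_lt_of_le hxy with rfl | h
    · exact le_rfl
    · exact (hanti ⟨le_rfl, hx.2⟩ ⟨hxy, hy.2⟩ h).le
  have hunn : ∀ r ∈ Ioc (0:ℝ) 1, 0 ≤ u r := by
    intro r hr
    have := hmono r hr 1 ⟨one_pos, le_rfl⟩ hr.2
    rw [hu1] at this
    exact this
  -- continuity facts
  have hrpowC : Continuous fun s : ℝ => s ^ ((n : ℝ) - 1) := by
    rw [continuous_iff_continuousAt]
    exact fun s => Real.continuousAt_rpow_const s _ (Or.inr hexp)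
  have hfu : ContinuousOn (fun t : ℝ => f (u t)) (Ioc (0:ℝ) 1) :=
    hf.continuous.comp_continuousOn hucont
  have hgcont : ContinuousOn (fun t : ℝ => t ^ ((n : ℝ) - 1) * f (u t)) (Ioc (0:ℝ) 1) :=
    hrpowC.continuousOn.mul hfu
  set w : ℝ → ℝ := fun s : ℝ => s ^ ((n : ℝ) - 1) * |u' s| ^ (p - 2) * u' s with hwdef
  have hwcont : ContinuousOn w (Ioc (0:ℝ) 1) := by
    have h1 : ContinuousOn (fun s : ℝ => s ^ ((n : ℝ) - 1) * (|u' s| ^ (p - 2) * u' s))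
        (Ioc (0:ℝ) 1) := hrpowC.continuousOn.mul ((phi_cont hp).comp_continuousOn hu'c)
    simpa [hwdef, mul_assoc] using h1
  -- fundamental theorem of calculus for w
  have hFTC : ∀ a b : ℝ, 0 < a → a ≤ b → b ≤ 1 →
      ∫ t in a..b, t ^ ((n : ℝ) - 1) * f (u t) = w a - w b := by
    intro a b ha hab hb1
    have hsub : Icc a b ⊆ Ioc (0:ℝ) 1 := fun z hz => ⟨lt_of_lt_of_le ha hz.1, le_trans hz.2 hb1⟩
    have hci : IntervalIntegrable (fun t : ℝ => t ^ ((n : ℝ) - 1) * f (u t)) volume a b :=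
      (hgcont.mono hsub).intervalIntegrable_of_Icc hab
    have hderiv : ∀ x ∈ Ioo a b, HasDerivAt w (-(x ^ ((n : ℝ) - 1) * f (u x))) x := by
      intro x hx
      exact hODE x ⟨lt_trans ha hx.1, lt_of_lt_of_le hx.2 hb1⟩
    have heq := intervalIntegral.integral_eq_sub_of_hasDerivAt_of_le hab
      (hwcont.mono hsub) hderiv hci.neg
    have h2 : ∫ t in a..b, -(t ^ ((n : ℝ) - 1) * f (u t)) =
        -∫ t in a..b, t ^ ((n : ℝ) - 1) * f (u t) := intervalIntegral.integral_neg
    rw [h2] at heq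
    linarith [heq]
  obtain ⟨Φ, hΦdef⟩ : ∃ Φ : ℝ, Φ = -(w 1) := ⟨_, rfl⟩
  have hwle : ∀ a ∈ Ioo (0:ℝ) 1, w a ≤ 0 := by
    intro a ha
    have h1 : 0 ≤ a ^ ((n : ℝ) - 1) * |u' a| ^ (p - 2) :=
      mul_nonneg (Real.rpow_nonneg ha.1.le _) (Real.rpow_nonneg (abs_nonneg _) _)
    have h2 := hu'neg a ha
    have : w a = a ^ ((n : ℝ) - 1) * |u' a| ^ (p - 2) * u' a := rfl
    nlinarith [mul_nonneg h1 (neg_nonneg.mpr h2.le)]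
  have hIntFlux : ∀ a : ℝ, 0 < a → a < 1 →
      ∫ t in a..1, t ^ ((n : ℝ) - 1) * f (u t) ≤ Φ := by
    intro a ha ha1
    rw [hFTC a 1 ha ha1.le le_rfl, hΦdef]
    have := hwle a ⟨ha, ha1⟩
    linarith
  -- nonnegativity of the flux integrand
  have hgnn : ∀ t ∈ Ioc (0:ℝ) 1, 0 ≤ t ^ ((n : ℝ) - 1) * f (u t) := by
    intro t ht
    exact mul_nonneg (Real.rpow_nonneg ht.1.le _) (hfpos _ (hunn t ht)).le
  -- the special radius
  obtain ⟨ρ, hρdef⟩ : ∃ ρ : ℝ, ρ = 1 - A / 8 := ⟨_, rfl⟩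
  have hρ1 : ρ < 1 := by rw [hρdef]; linarith
  have hρhalf : 1/2 < ρ := by rw [hρdef]; linarith
  have hρ0 : 0 < ρ := lt_trans (by norm_num) hρhalf
  have hρmem : ρ ∈ Ioo (0:ℝ) 1 := ⟨hρ0, hρ1⟩
  have hρmem' : ρ ∈ Ioc (0:ℝ) 1 := ⟨hρ0, hρ1.le⟩
  obtain ⟨q, hqdef⟩ : ∃ q : ℝ, q = u ρ := ⟨_, rfl⟩
  have hq0 : 0 < q := hqdef ▸ hupos ρ hρmem
  have hfq0 : 0 < f q := hfpos q hq0.le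
  -- monotonicity of f
  have hfmono' : MonotoneOn f (Ici (0:ℝ)) := by
    apply monotoneOn_of_deriv_nonneg (convex_Ici 0) hf.continuous.continuousOn
    · intro x _
      exact ((hf.differentiable one_ne_zero) x).differentiableWithinAt
    · intro x hx
      rw [interior_Ici] at hx
      exact hfmono x hx.le
  -- Step (i): A/4 * f q ≤ Φ
  have hlow : A / 4 * f q ≤ Φ := by
    have hint1 : IntervalIntegrable (fun t : ℝ => t ^ ((n : ℝ) - 1) * f (u t)) volume (1/2) ρ :=
      (hgcont.mono (fun z hz => ⟨by linarith [hz.1], by linarith [hz.2]⟩)).intervalIntegrable_of_Icc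
        hρhalf.le
    have hint2 : IntervalIntegrable (fun t : ℝ => t ^ ((n : ℝ) - 1) * f (u t)) volume ρ 1 :=
      (hgcont.mono (fun z hz => ⟨by linarith [hz.1], hz.2⟩)).intervalIntegrable_of_Icc hρ1.le
    have hptwise : ∀ t ∈ Icc (1/2 : ℝ) ρ, A * f q ≤ t ^ ((n : ℝ) - 1) * f (u t) := by
      intro t ht
      have ht' : t ∈ Ioc (0:ℝ) 1 := ⟨by linarith [ht.1], by linarith [ht.2]⟩
      have h1 : A ≤ t ^ ((n : ℝ) - 1) := by
        rw [hAdef]; exact Real.rpow_le_rpow (by norm_num) ht.1 hexp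
      have h2 : f q ≤ f (u t) := by
        rw [hqdef]
        exact hfmono' (hunn ρ hρmem') (hunn t ht') (hmono t ht' ρ hρmem' ht.2)
      exact mul_le_mul h1 h2 hfq0.le (Real.rpow_nonneg (le_trans (by norm_num) ht.1) _)
    have hconst : ∫ _ in (1/2 : ℝ)..ρ, (A * f q) = (ρ - 1/2) * (A * f q) := by
      rw [intervalIntegral.integral_const, smul_eq_mul]
    have hmono_int := intervalIntegral.integral_mono_on hρhalf.le
      intervalIntegrable_const hint1 hptwise
    rw [hconst] at hmono_int
    have hsplit : ∫ t in (1/2 : ℝ)..1, t ^ ((n : ℝ) - 1) * f (u t) =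
        (∫ t in (1/2 : ℝ)..ρ, t ^ ((n : ℝ) - 1) * f (u t)) +
        ∫ t in ρ..1, t ^ ((n : ℝ) - 1) * f (u t) :=
      (intervalIntegral.integral_add_adjacent_intervals hint1 hint2).symm
    have hnn2 : 0 ≤ ∫ t in ρ..1, t ^ ((n : ℝ) - 1) * f (u t) := by
      apply intervalIntegral.integral_nonneg hρ1.le
      intro x hx
      exact hgnn x ⟨by linarith [hx.1], hx.2⟩
    have hflux := hIntFlux (1/2) (by norm_num) (by norm_num)
    have hquarter : (1:ℝ)/4 ≤ ρ - 1/2 := by simp only [hρdef]; linarith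
    nlinarith [mul_le_mul_of_nonneg_right hquarter (mul_nonneg hA0.le hfq0.le)]
  have hΦ0 : 0 < Φ := lt_of_lt_of_le (by positivity) hlow
  -- Step (ii): derivative lower bound on [ρ, 1]
  have hu'low : ∀ s ∈ Icc ρ 1, (Φ/2) ^ (1/(p-1)) ≤ -(u' s) := by
    intro s hs
    have hs0 : 0 < s := lt_of_lt_of_le hρ0 hs.1
    have hsmem : s ∈ Ioc (0:ℝ) 1 := ⟨hs0, hs.2⟩
    -- the tail integral is at most Φ/2
    have htail : ∫ t in s..1, t ^ ((n : ℝ) - 1) * f (u t) ≤ Φ / 2 := by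
      have hint : IntervalIntegrable (fun t : ℝ => t ^ ((n : ℝ) - 1) * f (u t)) volume s 1 :=
        (hgcont.mono (fun z hz => ⟨lt_of_lt_of_le hs0 hz.1, hz.2⟩)).intervalIntegrable_of_Icc hs.2
      have hptwise : ∀ t ∈ Icc s 1, t ^ ((n : ℝ) - 1) * f (u t) ≤ f q := by
        intro t ht
        have ht' : t ∈ Ioc (0:ℝ) 1 := ⟨lt_of_lt_of_le hs0 ht.1, ht.2⟩
        have h1 : t ^ ((n : ℝ) - 1) ≤ 1 :=
          Real.rpow_le_one (le_trans hs0.le ht.1) ht.2 hexp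
        have h2 : f (u t) ≤ f q := by
          rw [hqdef]
          exact hfmono' (hunn t ht') (hunn ρ hρmem') (hmono ρ hρmem' t ht' (le_trans hs.1 ht.1))
        calc t ^ ((n : ℝ) - 1) * f (u t) ≤ 1 * f (u t) :=
              mul_le_mul_of_nonneg_right h1 (hfpos _ (hunn t ht')).le
          _ = f (u t) := one_mul _
          _ ≤ f q := h2
      have hconst : ∫ _ in s..1, f q = (1 - s) * f q := by
        rw [intervalIntegral.integral_const, smul_eq_mul]
      have hmi := intervalIntegral.integral_mono_on hs.2 hint intervalIntegrable_const hptwise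
      rw [hconst] at hmi
      have h1s : 1 - s ≤ A / 8 := by
        have hss := hs.1
        rw [hρdef] at hss
        linarith
      have h2s : (1 - s) * f q ≤ A / 8 * f q :=
        mul_le_mul_of_nonneg_right h1s hfq0.le
      linarith
    have hws : Φ / 2 ≤ -(w s) := by
      have heq := hFTC s 1 hs0 hs.2 le_rfl
      rw [hΦdef] at htail ⊢
      linarith
    -- u' s < 0
    have hu's : u' s < 0 := by
      by_contra hcon
      push_neg at hcon
      have h1 : 0 ≤ s ^ ((n : ℝ) - 1) * |u' s| ^ (p - 2) :=
        mul_nonneg (Real.rpow_nonneg hs0.le _) (Real.rpow_nonneg (abs_nonneg _) _)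
      have : 0 ≤ w s := mul_nonneg h1 hcon
      linarith
    have habs : |u' s| = -(u' s) := abs_of_neg hu's
    have habs0 : |u' s| ≠ 0 := by rw [habs]; exact (neg_pos.2 hu's).ne'
    have hcalc : -(w s) = s ^ ((n : ℝ) - 1) * (-(u' s)) ^ (p - 1) := by
      have h1 : |u' s| ^ (p - 2) * |u' s| = |u' s| ^ (p - 1) := by
        rw [← Real.rpow_add_one habs0]
        ring_nf
      have : -(w s) = s ^ ((n : ℝ) - 1) * (|u' s| ^ (p - 2) * |u' s|) := by
        simp only [hwdef]
        rw [habs]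
        ring
      rw [this, h1, habs]
    have hkey : Φ / 2 ≤ (-(u' s)) ^ (p - 1) := by
      rw [hcalc] at hws
      have hX : 0 ≤ (-(u' s)) ^ (p - 1) := Real.rpow_nonneg (neg_nonneg.2 hu's.le) _
      have hse : s ^ ((n : ℝ) - 1) ≤ 1 := Real.rpow_le_one hs0.le hs.2 hexp
      nlinarith [mul_le_of_le_one_left hX hse]
    have := Real.rpow_le_rpow (by positivity) hkey (by positivity : (0:ℝ) ≤ 1/(p-1))
    rwa [← Real.rpow_mul (neg_nonneg.2 hu's.le), mul_one_div, div_self hp1.ne',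
      Real.rpow_one] at this
  -- Step (iii): q ≥ (A/8) * (Φ/2)^(1/(p-1))
  have hqlow : A / 8 * (Φ/2) ^ (1/(p-1)) ≤ q := by
    have hsub : Icc ρ 1 ⊆ Ioc (0:ℝ) 1 := fun z hz => ⟨lt_of_lt_of_le hρ0 hz.1, hz.2⟩
    have hu'int : IntervalIntegrable u' volume ρ 1 :=
      (hu'c.mono hsub).intervalIntegrable_of_Icc hρ1.le
    have hFTCu : ∫ t in ρ..1, u' t = u 1 - u ρ := by
      apply intervalIntegral.integral_eq_sub_of_hasDerivAt_of_le hρ1.le (hucont.mono hsub)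
        (fun x hx => (hud x ⟨lt_trans hρ0 hx.1, hx.2.le⟩).hasDerivAt
          (Ioc_mem_nhds (lt_trans hρ0 hx.1) hx.2)) hu'int
    have hFTCu' : ∫ t in ρ..1, -(u' t) = q := by
      rw [intervalIntegral.integral_neg, hFTCu, hu1, hqdef]
      ring
    have hconst : ∫ _ in ρ..1, ((Φ/2) ^ (1/(p-1)) : ℝ) = (1 - ρ) * (Φ/2) ^ (1/(p-1)) := by
      rw [intervalIntegral.integral_const, smul_eq_mul]
    have hu'int2 : IntervalIntegrable (fun t : ℝ => -(u' t)) volume ρ 1 := hu'int.neg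
    have hmono_int := intervalIntegral.integral_mono_on hρ1.le intervalIntegrable_const
      hu'int2 hu'low
    rw [hconst, hFTCu'] at hmono_int
    have : 1 - ρ = A / 8 := by rw [hρdef]; ring
    rw [this] at hmono_int
    exact hmono_int
  -- Φ ≤ 2 * B^(p-1) * q^(p-1)
  have hΦle : Φ ≤ 2 * B ^ (p - 1) * q ^ (p - 1) := by
    have hX0 : (0:ℝ) ≤ (Φ/2) ^ (1/(p-1)) := Real.rpow_nonneg (by positivity) _
    have hXB : (Φ/2) ^ (1/(p-1)) ≤ B * q := by
      have h1 : (Φ/2) ^ (1/(p-1)) = B * (A / 8 * (Φ/2) ^ (1/(p-1))) := by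
        rw [hBdef]; field_simp
      rw [h1]
      exact mul_le_mul_of_nonneg_left hqlow hB0.le
    have h2 := Real.rpow_le_rpow hX0 hXB hp1'
    rw [← Real.rpow_mul (by positivity : (0:ℝ) ≤ Φ/2), one_div,
      inv_mul_cancel₀ hp1.ne', Real.rpow_one, Real.mul_rpow hB0.le hq0.le] at h2
    linarith
  -- superlinearity: q < Ts
  have hqTs : q < Ts := by
    by_contra hcon
    push_neg at hcon
    have hq1 : (1:ℝ) ≤ q := le_trans hTs1 hcon
    have hqp : 0 < q ^ (p - 1) := Real.rpow_pos_of_pos hq0 _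
    have h1 : Kstar + 1 ≤ f q / q ^ (p - 1) := hT₁ q (le_trans (show T₁ ≤ Ts by rw [hTsdef]; exact le_max_left _ _) hcon)
    have h2 : (Kstar + 1) * q ^ (p - 1) ≤ f q := (le_div_iff₀ hqp).mp h1
    -- but f q ≤ Kstar * q^(p-1)
    have h3 : f q ≤ Kstar * q ^ (p - 1) := by
      have h4 : A / 4 * f q ≤ 2 * B ^ (p - 1) * q ^ (p - 1) := le_trans hlow hΦle
      have h5 : f q = (4 / A) * (A / 4 * f q) := by field_simp
      rw [h5, hKdef]
      calc (4 / A) * (A / 4 * f q) ≤ (4 / A) * (2 * B ^ (p - 1) * q ^ (p - 1)) :=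
            mul_le_mul_of_nonneg_left h4 (by positivity)
        _ = 4 / A * (2 * B ^ (p - 1)) * q ^ (p - 1) := by ring
    nlinarith
  have hΦmaxle : Φ ≤ Φmax := by
    have h1 : q ^ (p - 1) ≤ Ts ^ (p - 1) := Real.rpow_le_rpow hq0.le hqTs.le hp1'
    have h2 : (0:ℝ) ≤ 2 * B ^ (p - 1) := by positivity
    calc Φ ≤ 2 * B ^ (p - 1) * q ^ (p - 1) := hΦle
      _ ≤ 2 * B ^ (p - 1) * Ts ^ (p - 1) := mul_le_mul_of_nonneg_left h1 h2
      _ = Φmax := by rw [hΦmaxdef]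
  -- the integrand
  set h : ℝ → ℝ := fun t : ℝ => t ^ ((n : ℝ) - 1) * ((u t) ^ (p - 1) + f (u t)) with hhdef
  have hhcont : ContinuousOn h (Ioc (0:ℝ) 1) := by
    apply hrpowC.continuousOn.mul
    apply ContinuousOn.add _ hfu
    have hc : Continuous fun x : ℝ => x ^ (p - 1) := by
      rw [continuous_iff_continuousAt]
      exact fun x => Real.continuousAt_rpow_const x _ (Or.inr hp1')
    exact hc.comp_continuousOn hucont
  have hhnn : ∀ t ∈ Ioc (0:ℝ) 1, 0 ≤ h t := by
    intro t ht
    have := hunn t ht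
    have := (hfpos _ (hunn t ht)).le
    have h1 : 0 ≤ (u t) ^ (p - 1) := Real.rpow_nonneg (hunn t ht) _
    apply mul_nonneg (Real.rpow_nonneg ht.1.le _)
    linarith
  -- bound on intervals
  have hfinal : ∀ a : ℝ, 0 < a → a < 1 → ∫ t in a..1, h t ≤ 2 * Φmax + T₀ ^ (p - 1) := by
    intro a ha ha1
    have hsub : Icc a 1 ⊆ Ioc (0:ℝ) 1 := fun z hz => ⟨lt_of_lt_of_le ha hz.1, hz.2⟩
    have hint1 : IntervalIntegrable h volume a 1 :=
      (hhcont.mono hsub).intervalIntegrable_of_Icc ha1.le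
    have hintg : IntervalIntegrable (fun t : ℝ => t ^ ((n : ℝ) - 1) * f (u t)) volume a 1 :=
      (hgcont.mono hsub).intervalIntegrable_of_Icc ha1.le
    have hint2 : IntervalIntegrable
        (fun t : ℝ => 2 * (t ^ ((n : ℝ) - 1) * f (u t)) + T₀ ^ (p - 1)) volume a 1 :=
      (hintg.const_mul 2).add intervalIntegrable_const
    have hptwise : ∀ t ∈ Icc a 1,
        h t ≤ 2 * (t ^ ((n : ℝ) - 1) * f (u t)) + T₀ ^ (p - 1) := by
      intro t ht
      simp only [hhdef]
      have ht' : t ∈ Ioc (0:ℝ) 1 := hsub ht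
      have hu0 : 0 ≤ u t := hunn t ht'
      have hte0 : 0 ≤ t ^ ((n : ℝ) - 1) := Real.rpow_nonneg (le_trans ha.le ht.1) _
      have hte1 : t ^ ((n : ℝ) - 1) ≤ 1 := Real.rpow_le_one (le_trans ha.le ht.1) ht.2 hexp
      have hfut : 0 ≤ f (u t) := (hfpos _ hu0).le
      have hsplit : (u t) ^ (p - 1) ≤ f (u t) + T₀ ^ (p - 1) := by
        rcases le_or_gt T₀ (u t) with hc | hc
        · have h1 : 1 ≤ f (u t) / (u t) ^ (p - 1) := hT₂ (u t) (le_trans (show T₂ ≤ T₀ by rw [hT₀def]; exact le_max_left _ _) hc)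
          have hpow : 0 < (u t) ^ (p - 1) :=
            Real.rpow_pos_of_pos (lt_of_lt_of_le hT₀0 hc) _
          have h2 := (le_div_iff₀ hpow).mp h1
          rw [one_mul] at h2
          linarith
        · have h1 : (u t) ^ (p - 1) ≤ T₀ ^ (p - 1) := Real.rpow_le_rpow hu0 hc.le hp1'
          linarith
      nlinarith [mul_le_mul_of_nonneg_left hsplit hte0,
        mul_le_of_le_one_left hT₀p hte1, mul_nonneg hte0 hfut]
    have hmono_int := intervalIntegral.integral_mono_on ha1.le hint1 hint2 hptwise
    have heval : ∫ t in a..1, (2 * (t ^ ((n : ℝ) - 1) * f (u t)) + T₀ ^ (p - 1)) =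
        2 * (∫ t in a..1, t ^ ((n : ℝ) - 1) * f (u t)) + (1 - a) * T₀ ^ (p - 1) := by
      rw [intervalIntegral.integral_add (hintg.const_mul 2) intervalIntegrable_const,
        intervalIntegral.integral_const_mul, intervalIntegral.integral_const, smul_eq_mul]
    rw [heval] at hmono_int
    have hflux := hIntFlux a ha ha1
    nlinarith [hT₀p]
  -- wrap up: improper integral
  set aseq : ℕ → ℝ := fun i => 1 / ((i : ℝ) + 2) with haseq
  have haseq_mem : ∀ i : ℕ, aseq i ∈ Ioo (0:ℝ) 1 := by
    intro i
    constructor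
    · positivity
    · rw [haseq, div_lt_one (by positivity)]
      have : (0:ℝ) ≤ (i:ℝ) := Nat.cast_nonneg i
      linarith
  have haseq_tend : Tendsto aseq atTop (𝓝 0) := by
    have h1 : Tendsto (fun i : ℕ => ((i : ℝ) + 2)) atTop atTop :=
      tendsto_atTop_add_const_right _ 2 tendsto_natCast_atTop_atTop
    simpa [haseq, one_div, Pi.inv_def] using h1.inv_tendsto_atTop
  have hinteg_i : ∀ i : ℕ, IntegrableOn h (Ioc (aseq i) 1) := by
    intro i
    have hsub : Icc (aseq i) 1 ⊆ Ioc (0:ℝ) 1 :=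
      fun z hz => ⟨lt_of_lt_of_le (haseq_mem i).1 hz.1, hz.2⟩
    exact ((hhcont.mono hsub).integrableOn_Icc).mono_set Ioc_subset_Icc_self
  have hbound_i : ∀ i : ℕ, (∫ x in Ioc (aseq i) 1, ‖h x‖) ≤ 2 * Φmax + T₀ ^ (p - 1) := by
    intro i
    have hcongr : ∫ x in Ioc (aseq i) 1, ‖h x‖ = ∫ x in Ioc (aseq i) 1, h x := by
      apply setIntegral_congr_fun measurableSet_Ioc
      intro x hx
      exact norm_of_nonneg (hhnn x ⟨lt_trans (haseq_mem i).1 hx.1, hx.2⟩)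
    rw [hcongr, ← intervalIntegral.integral_of_le (haseq_mem i).2.le]
    exact hfinal (aseq i) (haseq_mem i).1 (haseq_mem i).2
  have hintegrable : IntegrableOn h (Ioc (0:ℝ) 1) := by
    apply integrableOn_Ioc_of_intervalIntegral_norm_bounded_left hinteg_i haseq_tend
    exact Filter.Eventually.of_forall hbound_i
  refine ⟨hintegrable, ?_⟩
  -- the set integral is the limit of integrals over Ioc (aseq i) 1
  have hsm : ∀ i : ℕ, MeasurableSet (Ioc (aseq i) 1) := fun i => measurableSet_Ioc
  have haseq_anti : ∀ i j : ℕ, i ≤ j → aseq j ≤ aseq i := by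
    intro i j hij
    apply one_div_le_one_div_of_le (by positivity)
    have : (i:ℝ) ≤ (j:ℝ) := Nat.cast_le.mpr hij
    linarith
  have hmono_set : Monotone fun i : ℕ => Ioc (aseq i) 1 :=
    fun i j hij => Ioc_subset_Ioc (haseq_anti i j hij) le_rfl
  have hunion : (⋃ i : ℕ, Ioc (aseq i) 1) = Ioc (0:ℝ) 1 := by
    ext x
    simp only [mem_iUnion, mem_Ioc]
    constructor
    · rintro ⟨i, h1, h2⟩
      exact ⟨lt_trans (haseq_mem i).1 h1, h2⟩
    · rintro ⟨h1, h2⟩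
      obtain ⟨m, hm⟩ := exists_nat_one_div_lt h1
      refine ⟨m, ?_, h2⟩
      calc aseq m = 1 / ((m:ℝ) + 2) := rfl
        _ < 1 / ((m:ℝ) + 1) := by
            apply one_div_lt_one_div_of_lt (by positivity)
            linarith
        _ < x := hm
  have htendsto : Tendsto (fun i : ℕ => ∫ x in Ioc (aseq i) 1, h x) atTop
      (𝓝 (∫ x in Ioc (0:ℝ) 1, h x)) := by
    have := tendsto_setIntegral_of_monotone hsm hmono_set (hunion ▸ hintegrable)
    rwa [hunion] at this
  have hle := le_of_tendsto htendsto (Filter.Eventually.of_forall (fun i : ℕ => by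
    rw [← intervalIntegral.integral_of_le (haseq_mem i).2.le]
    exact hfinal (aseq i) (haseq_mem i).1 (haseq_mem i).2))
  calc ∫ r in Ioc (0:ℝ) 1, r ^ ((n : ℝ) - 1) * ((u r) ^ (p - 1) + f (u r))
      = ∫ x in Ioc (0:ℝ) 1, h x := rfl
    _ ≤ 2 * Φmax + T₀ ^ (p - 1) := hle
    _ ≤ 2 * Φmax + T₀ ^ (p - 1) + 1 := by linarith
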